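/- The Sheffer function (NOR) on the two-element set, i.e. the binary operation on {0,1} defined by 0|0 = 1 and x|y = 0 otherwise (equivalently x|y = ¬(x ∨ y) on Booleans), is a Catalan operation: any two distinct bracketings of the same size induce distinct regular operations over it. (Paper's Proposition 4.2.) -/

import Mathlib

/-- A bracketing of size `n`: a full binary tree with `n` leaves. -/
inductive Bracketing : ℕ → Type
  | leaf : Bracketing 1
  | node : {k l : ℕ} → Bracketing k → Bracketing l → Bracketing (k + l)

/-- The `n`-ary regular operation induced by a bracketing on a magma `(G, op)`. -/
def Bracketing.eval {G : Type*} (op : G → G → G) : {n : ℕ} → Bracketing n → (Fin n → G) → G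
  | _, .leaf, v => v 0
  | _, .node P Q, v =>
      op (Bracketing.eval op P (fun i => v (Fin.castAdd _ i)))
         (Bracketing.eval op Q (fun i => v (Fin.natAdd _ i)))

/-- The associative spectrum: the number of distinct `n`-ary regular operations. -/
noncomputable def assocSpectrum {G : Type*} (op : G → G → G) (n : ℕ) : ℕ :=
  Nat.card {f : (Fin n → G) → G // ∃ B : Bracketing n, f = Bracketing.eval op B}

/-- The depth of the `i`-th leaf of a bracketing. -/
def Bracketing.depth : {n : ℕ} → Bracketing n → Fin n → ℕ
  | _, .leaf, _ => 0
  | _, .node (k := k) P Q, i =>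
      if h : (i : ℕ) < k then Bracketing.depth P ⟨i, h⟩ + 1
      else Bracketing.depth Q ⟨(i : ℕ) - k, by have := i.isLt; omega⟩ + 1

/-- The right depth of the `i`-th leaf of a bracketing. -/
def Bracketing.rdepth : {n : ℕ} → Bracketing n → Fin n → ℕ
  | _, .leaf, _ => 0
  | _, .node (k := k) P Q, i =>
      if h : (i : ℕ) < k then Bracketing.rdepth P ⟨i, h⟩
      else Bracketing.rdepth Q ⟨(i : ℕ) - k, by have := i.isLt; omega⟩ + 1

/-- The left depth of the `i`-th leaf of a bracketing. -/
def Bracketing.ldepth : {n : ℕ} → Bracketing n → Fin n → ℕ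
  | _, .leaf, _ => 0
  | _, .node (k := k) P Q, i =>
      if h : (i : ℕ) < k then Bracketing.ldepth P ⟨i, h⟩ + 1
      else Bracketing.ldepth Q ⟨(i : ℕ) - k, by have := i.isLt; omega⟩

/-- A magma operation is Catalan if distinct bracketings of equal size
    induce distinct regular operations. -/
def IsCatalanOp {G : Type*} (op : G → G → G) : Prop :=
  ∀ (n : ℕ) (B₁ B₂ : Bracketing n), B₁ ≠ B₂ →
    Bracketing.eval op B₁ ≠ Bracketing.eval op B₂

namespace NorProof

/-- evaluation with ℕ-indexed arguments -/
def evalN : {n : ℕ} → Bracketing n → (ℕ → Bool) → Bool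
  | _, .leaf, f => f 0
  | _, .node (k := k) P Q, f => !(evalN P f || evalN Q (fun j => f (k + j)))

lemma evalN_eq {n} (B : Bracketing n) (f : ℕ → Bool) :
    evalN B f = Bracketing.eval (fun x y : Bool => !(x || y)) B (fun i => f i) := by
  induction B generalizing f with
  | leaf => rfl
  | node P Q ihP ihQ =>
      simp only [evalN, Bracketing.eval, ihP, ihQ, Fin.coe_castAdd, Fin.coe_natAdd]

lemma evalN_congr {n} (B : Bracketing n) {f g : ℕ → Bool} (h : ∀ j < n, f j = g j) :
    evalN B f = evalN B g := by
  induction B generalizing f g with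
  | leaf => simp [evalN, h 0 Nat.one_pos]
  | node P Q ihP ihQ =>
      simp only [evalN]
      rw [ihP (fun j hj => h j (by omega)), ihQ (fun j hj => h _ (by omega))]

lemma size_pos {n} (B : Bracketing n) : 1 ≤ n := by
  induction B <;> omega

lemma attain {n} (B : Bracketing n) (b : Bool) : ∃ f, evalN B f = b := by
  induction B generalizing b with
  | leaf => exact ⟨fun _ => b, rfl⟩
  | node P Q ihP ihQ =>
      rename_i k l
      cases b with
      | false =>
          obtain ⟨g, hg⟩ := ihP true
          refine ⟨fun j => if j < k then g j else false, ?_⟩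
          have h1 : evalN P (fun j => if j < k then g j else false) = evalN P g :=
            evalN_congr P (by intro j hj; simp [hj])
          simp only [evalN]
          rw [h1, hg]
          simp
      | true =>
          obtain ⟨g, hg⟩ := ihP false
          obtain ⟨w, hw⟩ := ihQ false
          refine ⟨fun j => if j < k then g j else w (j - k), ?_⟩
          have h1 : evalN P (fun j => if j < k then g j else w (j - k)) = evalN P g :=
            evalN_congr P (by intro j hj; simp [hj])
          have h2 : evalN Q (fun j => if k + j < k then g (k + j) else w (k + j - k))
              = evalN Q w := by
            refine evalN_congr Q ?_
            intro j hj
            have hnk : ¬ (k + j < k) := by omega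
            simp [hnk]
          simp only [evalN, h1, h2, hg, hw]
          rfl

lemma essential {n} (B : Bracketing n) (i : ℕ) (hi : i < n) :
    ∃ f g : ℕ → Bool, (∀ j, j ≠ i → f j = g j) ∧ evalN B f ≠ evalN B g := by
  induction B generalizing i with
  | leaf =>
      refine ⟨fun j => if j = 0 then true else false, fun _ => false, ?_, ?_⟩
      · intro j hj
        have : i = 0 := by omega
        simp [this] at hj
        simp [hj]
      · simp [evalN]
  | node P Q ihP ihQ =>
      rename_i k l
      by_cases hik : i < k
      · obtain ⟨f₀, g₀, hagree, hne⟩ := ihP i hik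
        obtain ⟨w, hw⟩ := attain Q false
        refine ⟨fun j => if j < k then f₀ j else w (j - k),
                fun j => if j < k then g₀ j else w (j - k), ?_, ?_⟩
        · intro j hj
          by_cases h : j < k
          · simp [h, hagree j hj]
          · simp [h]
        · have e1 : evalN P (fun j => if j < k then f₀ j else w (j - k)) = evalN P f₀ :=
            evalN_congr P (by intro j hj; simp [hj])
          have e2 : evalN P (fun j => if j < k then g₀ j else w (j - k)) = evalN P g₀ :=
            evalN_congr P (by intro j hj; simp [hj])
          have e3 : evalN Q (fun j => if k + j < k then f₀ (k + j) else w (k + j - k))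
              = evalN Q w := by
            refine evalN_congr Q ?_
            intro j hj
            have hnk : ¬ (k + j < k) := by omega
            simp [hnk]
          have e4 : evalN Q (fun j => if k + j < k then g₀ (k + j) else w (k + j - k))
              = evalN Q w := by
            refine evalN_congr Q ?_
            intro j hj
            have hnk : ¬ (k + j < k) := by omega
            simp [hnk]
          simp only [evalN, e1, e2, e3, e4, hw, Bool.or_false]
          simpa using hne
      · obtain ⟨f₀, g₀, hagree, hne⟩ := ihQ (i - k) (by omega)
        obtain ⟨w, hw⟩ := attain P false
        refine ⟨fun j => if j < k then w j else f₀ (j - k),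
                fun j => if j < k then w j else g₀ (j - k), ?_, ?_⟩
        · intro j hj
          by_cases h : j < k
          · simp [h]
          · have : j - k ≠ i - k := by omega
            simp [h, hagree _ this]
        · have e1 : evalN P (fun j => if j < k then w j else f₀ (j - k)) = evalN P w :=
            evalN_congr P (by intro j hj; simp [hj])
          have e2 : evalN P (fun j => if j < k then w j else g₀ (j - k)) = evalN P w :=
            evalN_congr P (by intro j hj; simp [hj])
          have e3 : evalN Q (fun j => if k + j < k then w (k + j) else f₀ (k + j - k))
              = evalN Q f₀ := by
            refine evalN_congr Q ?_
            intro j hj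
            have hnk : ¬ (k + j < k) := by omega
            simp [hnk]
          have e4 : evalN Q (fun j => if k + j < k then w (k + j) else g₀ (k + j - k))
              = evalN Q g₀ := by
            refine evalN_congr Q ?_
            intro j hj
            have hnk : ¬ (k + j < k) := by omega
            simp [hnk]
          simp only [evalN, e1, e2, e3, e4, hw, Bool.false_or]
          simpa using hne

/-- A NOR-tree function cannot be an OR of two functions of disjoint blocks,
both attaining `true`. -/
lemma noOrDecomp {m} (B : Bracketing m) (t : ℕ) (r s : (ℕ → Bool) → Bool)
    (ht1 : 1 ≤ t) (ht2 : t < m)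
    (hr : ∃ b, r b = true) (hs : ∃ c, s c = true)
    (h : ∀ b c, evalN B (fun j => if j < t then b j else c (j - t)) = (r b || s c)) :
    False := by
  cases B with
  | leaf => omega
  | node Q₁ Q₂ =>
      rename_i k l
      rcases le_or_gt k t with hkt | hkt
      · -- t ≥ k : fixing c with s c = true forces evalN Q₁ ≡ false
        obtain ⟨c, hc⟩ := hs
        obtain ⟨b, hb⟩ := attain Q₁ true
        have := h b c
        rw [hc, Bool.or_true] at this
        simp only [evalN, Bool.not_eq_true'] at this
        have h1 : evalN Q₁ (fun j => if j < t then b j else c (j - t)) = evalN Q₁ b := by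
          refine evalN_congr Q₁ ?_
          intro j hj
          have hjt : j < t := by omega
          rw [if_pos hjt]
        rw [h1, hb] at this
        simp at this
      · -- t < k : fixing b with r b = true forces evalN Q₂ ≡ false
        obtain ⟨b, hb⟩ := hr
        obtain ⟨h₀, hh₀⟩ := attain Q₂ true
        have := h b (fun i => h₀ (i + t - k))
        rw [hb, Bool.true_or] at this
        simp only [evalN, Bool.not_eq_true'] at this
        have h2 : evalN Q₂ (fun j =>
            if k + j < t then b (k + j) else (fun i => h₀ (i + t - k)) (k + j - t))
            = evalN Q₂ h₀ := by
          refine evalN_congr Q₂ ?_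
          intro j hj
          have hnk : ¬ (k + j < t) := by omega
          simp only [hnk, if_false]
          congr 1
          omega
        rw [h2, hh₀] at this
        simp at this

/-- cross-split contradiction -/
lemma cross {k l k' l' : ℕ} (P : Bracketing k) (Q : Bracketing l)
    (P' : Bracketing k') (Q' : Bracketing l')
    (hsum : k + l = k' + l') (hkk : k < k')
    (h : ∀ f : ℕ → Bool,
      (evalN P f || evalN Q (fun j => f (k + j)))
        = (evalN P' f || evalN Q' (fun j => f (k' + j)))) :
    False := by
  set t := k' - k with ht
  have ht1 : 1 ≤ t := by omega
  have hl' : 1 ≤ l' := size_pos Q'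
  have hk1 : 1 ≤ k := size_pos P
  have htl : t < l := by omega
  -- the block-split identity
  have key : ∀ (a b c : ℕ → Bool),
      (evalN P a || evalN Q (fun j => if j < t then b j else c (j - t)))
        = (evalN P' (fun j => if j < k then a j else b (j - k)) || evalN Q' c) := by
    intro a b c
    have := h (fun j => if j < k then a j else if j < k' then b (j - k) else c (j - k'))
    have e1 : evalN P (fun j => if j < k then a j else if j < k' then b (j - k) else c (j - k'))
        = evalN P a := evalN_congr P (by intro j hj; simp [hj])
    have e2 : evalN Q (fun j => if k + j < k then a (k + j)
          else if k + j < k' then b (k + j - k) else c (k + j - k'))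
        = evalN Q (fun j => if j < t then b j else c (j - t)) := by
      refine evalN_congr Q ?_
      intro j hj
      have h1 : ¬ (k + j < k) := by omega
      by_cases h2 : j < t
      · have h3 : k + j < k' := by omega
        simp only [h1, if_false, h3, if_true, h2]
        congr 1
        omega
      · have h3 : ¬ (k + j < k') := by omega
        simp only [h1, if_false, h3, h2]
        congr 1
        omega
    have e3 : evalN P' (fun j => if j < k then a j else if j < k' then b (j - k) else c (j - k'))
        = evalN P' (fun j => if j < k then a j else b (j - k)) := by
      refine evalN_congr P' ?_
      intro j hj
      by_cases h1 : j < k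
      · simp [h1]
      · simp [h1, hj]
    have e4 : evalN Q' (fun j => if k' + j < k then a (k' + j)
          else if k' + j < k' then b (k' + j - k) else c (k' + j - k'))
        = evalN Q' c := by
      refine evalN_congr Q' ?_
      intro j hj
      have h1 : ¬ (k' + j < k) := by omega
      have h2 : ¬ (k' + j < k') := by omega
      simp only [h1, h2, if_false]
      congr 1
      omega
    rw [e1, e2, e3, e4] at this
    exact this
  obtain ⟨a₀, ha₀⟩ := attain P false
  obtain ⟨c₀, hc₀⟩ := attain Q' false
  obtain ⟨c₁, hc₁⟩ := attain Q' true
  set r : (ℕ → Bool) → Bool := fun b => evalN Q (fun j => if j < t then b j else c₀ (j - t))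
    with hrdef
  have hrq : ∀ b c, evalN Q (fun j => if j < t then b j else c (j - t))
      = (r b || evalN Q' c) := by
    intro b c
    cases hc : evalN Q' c with
    | true =>
        have := key a₀ b c
        rw [ha₀, hc] at this
        simpa using this
    | false =>
        have h1 := key a₀ b c
        rw [ha₀, hc] at h1
        have h2 := key a₀ b c₀
        rw [ha₀, hc₀] at h2
        simp only [Bool.false_or, Bool.or_false] at h1 h2
        rw [Bool.or_false, hrdef]
        rw [h1, ← h2]
  by_cases hrt : ∃ b, r b = true
  · exact noOrDecomp Q t r (evalN Q') ht1 htl hrt ⟨c₁, hc₁⟩ hrq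
  · -- r ≡ false : Q does not depend on its first coordinate, contradicting essentiality
    push_neg at hrt
    have hrf : ∀ b, r b = false := by
      intro b
      cases hb : r b with
      | true => exact absurd hb (hrt b)
      | false => rfl
    obtain ⟨f, g, hagree, hne⟩ := essential Q 0 (by omega)
    apply hne
    have hgen : ∀ f₀ : ℕ → Bool, evalN Q f₀ = evalN Q' (fun j => f₀ (t + j)) := by
      intro f₀
      have e : evalN Q f₀
          = evalN Q (fun j => if j < t then f₀ j else (fun i => f₀ (t + i)) (j - t)) := by
        refine evalN_congr Q ?_
        intro j hj
        by_cases h1 : j < t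
        · rw [if_pos h1]
        · rw [if_neg h1]
          show f₀ j = f₀ (t + (j - t))
          congr 1
          omega
      rw [e, hrq f₀ (fun i => f₀ (t + i)), hrf, Bool.false_or]
    rw [hgen f, hgen g]
    congr 1
    funext j
    exact hagree (t + j) (by omega)

lemma decomp {n} (B : Bracketing n) :
    (∃ h : 1 = n, B = h ▸ Bracketing.leaf) ∨
    ∃ (k l : ℕ) (P : Bracketing k) (Q : Bracketing l) (h : k + l = n), B = h ▸ Bracketing.node P Q := by
  cases B with
  | leaf => exact Or.inl ⟨rfl, rfl⟩
  | node P Q => exact Or.inr ⟨_, _, P, Q, rfl, rfl⟩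

lemma evalN_cast {m n} (h : m = n) (B : Bracketing m) (f : ℕ → Bool) :
    evalN (h ▸ B : Bracketing n) f = evalN B f := by
  subst h; rfl

lemma inj : ∀ {n} (B₁ B₂ : Bracketing n), (∀ f, evalN B₁ f = evalN B₂ f) → B₁ = B₂ := by
  intro n B₁
  induction B₁ with
  | leaf =>
      intro B₂ h
      rcases decomp B₂ with ⟨he, rfl⟩ | ⟨k, l, P, Q, he, rfl⟩
      · rfl
      · have := size_pos P; have := size_pos Q; omega
  | node P Q ihP ihQ =>
      rename_i k l
      intro B₂ h
      rcases decomp B₂ with ⟨he, rfl⟩ | ⟨k', l', P', Q', he, rfl⟩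
      · have := size_pos P; have := size_pos Q; omega
      · have h' : ∀ f, (evalN P f || evalN Q (fun j => f (k + j)))
            = (evalN P' f || evalN Q' (fun j => f (k' + j))) := by
          intro f
          have := h f
          rw [evalN_cast] at this
          simp only [evalN] at this
          exact Bool.not_inj this
        rcases lt_trichotomy k k' with hkk | hkk | hkk
        · exact (cross P Q P' Q' he.symm hkk h').elim
        · -- k = k'
          subst hkk
          have hll : l = l' := by omega
          subst hll
          obtain ⟨w₀, hw₀⟩ := attain Q false
          obtain ⟨a₀, ha₀⟩ := attain P false
          have pair : ∀ (a w : ℕ → Bool),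
              (evalN P a || evalN Q w) = (evalN P' a || evalN Q' w) := by
            intro a w
            have := h' (fun j => if j < k then a j else w (j - k))
            have e1 : evalN P (fun j => if j < k then a j else w (j - k)) = evalN P a :=
              evalN_congr P (by intro j hj; simp [hj])
            have e2 : evalN Q (fun j => if k + j < k then a (k + j) else w (k + j - k))
                = evalN Q w := by
              refine evalN_congr Q ?_
              intro j hj
              have hnk : ¬ (k + j < k) := by omega
              simp only [hnk, if_false]
              congr 1
              omega
            have e3 : evalN P' (fun j => if j < k then a j else w (j - k)) = evalN P' a :=
              evalN_congr P' (by intro j hj; simp [hj])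
            have e4 : evalN Q' (fun j => if k + j < k then a (k + j) else w (k + j - k))
                = evalN Q' w := by
              refine evalN_congr Q' ?_
              intro j hj
              have hnk : ¬ (k + j < k) := by omega
              simp only [hnk, if_false]
              congr 1
              omega
            rw [e1, e2, e3, e4] at this
            exact this
          have hq'w₀ : evalN Q' w₀ = false := by
            by_contra hq
            have hq : evalN Q' w₀ = true := by
              cases hqq : evalN Q' w₀
              · exact absurd hqq hq
              · rfl
            have := pair a₀ w₀
            rw [ha₀, hw₀, hq] at this
            simp at this
          have hP : ∀ f, evalN P f = evalN P' f := by
            intro f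
            have := pair f w₀
            rw [hw₀, hq'w₀] at this
            simpa using this
          have hPP : P = P' := ihP P' hP
          have ha₀' : evalN P' a₀ = false := (hP a₀).symm.trans ha₀
          have hQ : ∀ f, evalN Q f = evalN Q' f := by
            intro f
            have h2 := pair a₀ f
            rw [ha₀, ha₀'] at h2
            simpa using h2
          have hQQ : Q = Q' := ihQ Q' hQ
          subst hPP; subst hQQ
          exact rfl
        · have h'' : ∀ f, (evalN P' f || evalN Q' (fun j => f (k' + j)))
              = (evalN P f || evalN Q (fun j => f (k + j))) := fun f => (h' f).symm
          exact (cross P' Q' P Q he hkk h'').elim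

end NorProof

/-- Paper's Proposition 4.2: the Sheffer function (NOR) on the two-element set is
Catalan. -/
theorem stmt12 : IsCatalanOp (fun x y : Bool => !(x || y)) := by
  intro n B₁ B₂ hne h
  apply hne
  apply NorProof.inj
  intro f
  rw [NorProof.evalN_eq, NorProof.evalN_eq, h]
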